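/- Fix a node u ∈ S, a subset V ⊆ C(u), and a child v ∈ C(u) \ V. Then D^u_{V ∪ {v}}(v) = D^u_{V, C(v)}(v), and for every a ∈ T(v) with a ≠ v, D^u_{V ∪ {v}}(a) = min over all partitions C(v) = W ⊎ W̄ into two disjoint (possibly empty) sets with a ∈ T(W̄) of (D^u_{V,W}(v) + D^v_{W̄}(a)). -/

import Mathlib

/-- A rooted tree on a vertex type `V`, given by a parent function under which
every vertex reaches the root. -/
structure ParentTree (V : Type) where
  root : V
  parent : V → V
  parent_root : parent root = root
  reaches_root : ∀ v, ∃ k, parent^[k] v = root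

namespace ParentTree

variable {V : Type}

/-- The set `C(u)` of children of `u`. -/
def children (T : ParentTree V) (u : V) : Set V := {v | T.parent v = u ∧ v ≠ u}

/-- The set `T(u)` of descendants of `u` (including `u` itself). -/
def desc (T : ParentTree V) (u : V) : Set V := {b | ∃ k, T.parent^[k] b = u}

/-- For a set `U` of siblings, `T(U) = ⋃_{u ∈ U} T(u)`. -/
def descU (T : ParentTree V) (U : Set V) : Set V := ⋃ u ∈ U, T.desc u

end ParentTree

/-- The set of points occurring in a list. -/
def listSet {V : Type} (l : List V) : Set V := {x | x ∈ l}

/-- The weight of a path (a list of points), i.e. the sum of distances over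
consecutive pairs. -/
def pathWeight {V X : Type} [MetricSpace X] (f : V → X) (l : List V) : ℝ :=
  ((l.zip l.tail).map fun p => dist (f p.1) (f p.2)).sum

/-- The elements of `A` occur consecutively in the list `l`. -/
def ConsecutiveIn {V : Type} (A : Set V) (l : List V) : Prop :=
  ∃ m : List V, m <:+: l ∧ listSet m = A

/-- A path conforms to the rooted tree `T` if for every node `w` with
`T(w)` contained in the vertex set of the path, the elements of `T(w)` occur
consecutively in the path. -/
def PathConforms {V : Type} (T : ParentTree V) (l : List V) : Prop :=
  ∀ w : V, T.desc w ⊆ listSet l → ConsecutiveIn (T.desc w) l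

/-- `DD T f u Vs a` : the minimum weight `D^u_{Vs}(a)` of a conforming path of
pairwise distinct points that starts at `u`, has vertex set `{u} ∪ T(Vs)`, and
ends at `a`. -/
noncomputable def DD {V X : Type} [MetricSpace X] (T : ParentTree V) (f : V → X)
    (u : V) (Vs : Set V) (a : V) : ℝ :=
  sInf {w | ∃ l : List V, l.Nodup ∧ l.head? = some u ∧ l.getLast? = some a ∧
    listSet l = {u} ∪ T.descU Vs ∧ PathConforms T l ∧ pathWeight f l = w}

/-- `DW T f u Vs v Ws` : the minimum weight `D^u_{Vs,Ws}(v)` of a conforming path of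
pairwise distinct points that starts at `u`, ends at `v`, has vertex set
`{u} ∪ T(Vs) ∪ T(Ws) ∪ {v}`, and in which `{u} ∪ T(Vs)` occurs as a prefix. -/
noncomputable def DW {V X : Type} [MetricSpace X] (T : ParentTree V) (f : V → X)
    (u : V) (Vs : Set V) (v : V) (Ws : Set V) : ℝ :=
  sInf {w | ∃ l : List V, l.Nodup ∧ l.head? = some u ∧ l.getLast? = some v ∧
    listSet l = {u} ∪ T.descU Vs ∪ T.descU Ws ∪ {v} ∧ PathConforms T l ∧
    (∃ l₁ l₂ : List V, l = l₁ ++ l₂ ∧ listSet l₁ = {u} ∪ T.descU Vs) ∧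
    pathWeight f l = w}



@[simp] lemma listSet_nil {V : Type} : listSet ([] : List V) = ∅ := by
  ext x; simp [listSet]

@[simp] lemma listSet_cons {V : Type} (a : V) (l : List V) :
    listSet (a :: l) = insert a (listSet l) := by
  ext x; simp [listSet]

@[simp] lemma listSet_append {V : Type} (l₁ l₂ : List V) :
    listSet (l₁ ++ l₂) = listSet l₁ ∪ listSet l₂ := by
  ext x; simp [listSet]

lemma mem_listSet {V : Type} {x : V} {l : List V} : x ∈ listSet l ↔ x ∈ l := Iff.rfl

@[simp] lemma listSet_singleton {V : Type} (a : V) : listSet [a] = {a} := by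
  ext x; simp [listSet]

lemma listSet_flatten {V : Type} (L : List (List V)) :
    listSet L.flatten = ⋃ l ∈ L, listSet l := by
  ext x; simp [listSet, List.mem_flatten]

lemma pathWeight_nonneg {V X : Type} [MetricSpace X] (f : V → X) (l : List V) :
    0 ≤ pathWeight f l := by
  apply List.sum_nonneg; intro x hx
  simp only [List.mem_map] at hx
  obtain ⟨p, -, rfl⟩ := hx
  exact dist_nonneg

@[simp] lemma pathWeight_nil {V X : Type} [MetricSpace X] (f : V → X) :
    pathWeight f ([] : List V) = 0 := by simp [pathWeight]

@[simp] lemma pathWeight_single {V X : Type} [MetricSpace X] (f : V → X) (a : V) :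
    pathWeight f [a] = 0 := by simp [pathWeight]

lemma pathWeight_cons_cons {V X : Type} [MetricSpace X] (f : V → X) (a b : V) (l : List V) :
    pathWeight f (a :: b :: l) = dist (f a) (f b) + pathWeight f (b :: l) := by
  simp [pathWeight]

lemma pathWeight_split {V X : Type} [MetricSpace X] (f : V → X) (y : V) (ys : List V) :
    ∀ xs : List V, pathWeight f (xs ++ y :: ys) = pathWeight f (xs ++ [y]) + pathWeight f (y :: ys)
  | [] => by simp
  | [x] => by simp [pathWeight_cons_cons]
  | (x :: x' :: xs) => by
      have h := pathWeight_split f y ys (x' :: xs)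
      simp only [List.cons_append] at h ⊢
      rw [pathWeight_cons_cons, pathWeight_cons_cons, h]; ring

section InfixLemmas
variable {V : Type}

/-- Unique splice point for nodup lists. -/
lemma splice_eq {a : V} : ∀ {s₁ s₂ t₁ t₂ : List V}, a ∉ s₁ → a ∉ s₂ →
    s₁ ++ a :: t₁ = s₂ ++ a :: t₂ → s₁ = s₂ ∧ t₁ = t₂
  | [], [], t₁, t₂, _, _, h => by simpa using h
  | [], (x :: s₂), t₁, t₂, h₁, h₂, h => by
      simp only [List.nil_append, List.cons_append, List.cons.injEq] at h
      exact absurd (by rw [h.1]; exact List.mem_cons_self) h₂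
  | (x :: s₁), [], t₁, t₂, h₁, h₂, h => by
      simp only [List.nil_append, List.cons_append, List.cons.injEq] at h
      exact absurd (by rw [← h.1]; exact List.mem_cons_self) h₁
  | (x :: s₁), (y :: s₂), t₁, t₂, h₁, h₂, h => by
      simp only [List.cons_append, List.cons.injEq] at h
      obtain ⟨rfl, h⟩ := h
      obtain ⟨h3, h4⟩ := splice_eq (fun hh => h₁ (List.mem_cons_of_mem _ hh))
        (fun hh => h₂ (List.mem_cons_of_mem _ hh)) h
      exact ⟨by rw [h3], h4⟩

/-- An infix of an append decomposes. -/
lemma infix_append_cases {m p r : List V} (h : m <:+: p ++ r) :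
    m <:+: p ∨ m <:+: r ∨
      ∃ m₁ m₂, m = m₁ ++ m₂ ∧ m₁ ≠ [] ∧ m₂ ≠ [] ∧ m₁ <:+ p ∧ m₂ <+: r := by
  induction p with
  | nil => exact Or.inr (Or.inl (by simpa using h))
  | cons x p' ih =>
    rw [List.cons_append, List.infix_cons_iff] at h
    rcases h with h | h
    · -- m is a prefix of (x :: p') ++ r
      rw [← List.cons_append] at h
      rcases le_or_gt m.length (x :: p').length with hl | hl
      · exact Or.inl ((List.prefix_of_prefix_length_le h (List.prefix_append _ _) hl).isInfix)
      · have hp : (x :: p') <+: m :=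
          List.prefix_of_prefix_length_le (List.prefix_append _ _) h hl.le
        obtain ⟨m₂, rfl⟩ := hp
        have hm₂ : m₂ <+: r := by
          obtain ⟨w, hw⟩ := h
          rw [List.append_assoc] at hw
          exact ⟨w, List.append_cancel_left hw⟩
        by_cases hm2 : m₂ = []
        · subst hm2; exact Or.inl (by simp)
        · exact Or.inr (Or.inr ⟨x :: p', m₂, rfl, by simp, hm2, List.suffix_refl _, hm₂⟩)
    · rcases ih h with h | h | ⟨m₁, m₂, rfl, h1, h2, h3, h4⟩
      · exact Or.inl (h.trans (List.suffix_cons x p').isInfix)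
      · exact Or.inr (Or.inl h)
      · exact Or.inr (Or.inr ⟨m₁, m₂, rfl, h1, h2, h3.trans (List.suffix_cons _ _), h4⟩)

lemma infix_of_infix_append_left {m p r : List V} (hnd : (p ++ r).Nodup)
    (h : m <:+: p ++ r) (hsub : listSet m ⊆ listSet p) : m <:+: p := by
  rcases infix_append_cases h with h | h | ⟨m₁, m₂, rfl, h1, h2, h3, h4⟩
  · exact h
  · rcases List.eq_nil_or_concat m with rfl | ⟨m', b, rfl⟩
    · exact List.nil_infix
    · exfalso
      have hb : b ∈ p := hsub (by simp [mem_listSet])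
      have hb' : b ∈ r := h.subset (by simp)
      exact (List.disjoint_of_nodup_append hnd hb hb').elim
  · exfalso
    obtain ⟨b, m₂', rfl⟩ := List.exists_cons_of_ne_nil h2
    have hb : b ∈ p := hsub (by simp [mem_listSet])
    have hb' : b ∈ r := h4.subset (by simp)
    exact (List.disjoint_of_nodup_append hnd hb hb').elim

lemma infix_of_infix_append_right {m p r : List V} (hnd : (p ++ r).Nodup)
    (h : m <:+: p ++ r) (hsub : listSet m ⊆ listSet r) : m <:+: r := by
  have hnd' : (r.reverse ++ p.reverse).Nodup := by
    rw [← List.reverse_append, List.nodup_reverse]; exact hnd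
  have h' : m.reverse <:+: r.reverse ++ p.reverse := by
    rw [← List.reverse_append, List.reverse_infix]; exact h
  have := infix_of_infix_append_left hnd' h' (by
    intro x hx; rw [mem_listSet, List.mem_reverse] at hx ⊢; exact hsub hx)
  rw [← List.reverse_infix]; simpa using this

lemma infix_cons_of_not_mem {m t : List V} {h : V} (hinf : m <:+: h :: t)
    (hm : h ∉ m) : m <:+: t := by
  cases m with
  | nil => exact List.nil_infix
  | cons b m' =>
    obtain ⟨s, u, hsu⟩ := hinf
    cases s with
    | nil =>
      simp only [List.nil_append, List.cons_append, List.cons.injEq] at hsu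
      exact absurd (by rw [hsu.1]; exact List.mem_cons_self) hm
    | cons x s' =>
      simp only [List.cons_append, List.cons.injEq] at hsu
      exact ⟨s', u, hsu.2⟩

lemma infix_side_of_nodup {m l₁ l₂ : List V} {x : V} (hnd : (l₁ ++ x :: l₂).Nodup)
    (hinf : m <:+: l₁ ++ x :: l₂) (hx : x ∉ m) : m <:+: l₁ ∨ m <:+: l₂ := by
  obtain ⟨s, t, hst⟩ := hinf
  have hxl : x ∈ s ∨ x ∈ m ∨ x ∈ t := by
    have : x ∈ s ++ m ++ t := by rw [hst]; simp
    simpa using this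
  rcases hxl with hxs | hxm | hxt
  · obtain ⟨s₁, s₂, rfl⟩ := List.append_of_mem hxs
    right
    have hst' : l₁ ++ x :: l₂ = s₁ ++ x :: (s₂ ++ m ++ t) := by
      rw [← hst]; simp
    have hxl₁ : x ∉ l₁ := fun hh =>
      (List.disjoint_of_nodup_append hnd hh (by simp)).elim
    have hxs₁ : x ∉ s₁ := by
      have hnd' : (s₁ ++ x :: (s₂ ++ m ++ t)).Nodup := hst' ▸ hnd
      exact fun hh => (List.disjoint_of_nodup_append hnd' hh (by simp)).elim
    obtain ⟨-, h2⟩ := splice_eq hxl₁ hxs₁ hst'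
    exact ⟨s₂, t, by rw [← h2]⟩
  · exact absurd hxm hx
  · obtain ⟨t₁, t₂, rfl⟩ := List.append_of_mem hxt
    left
    have hst' : l₁ ++ x :: l₂ = (s ++ m ++ t₁) ++ x :: t₂ := by
      rw [← hst]; simp
    have hxl₁ : x ∉ l₁ := fun hh =>
      (List.disjoint_of_nodup_append hnd hh (by simp)).elim
    have hx' : x ∉ s ++ m ++ t₁ := by
      have hnd' : ((s ++ m ++ t₁) ++ x :: t₂).Nodup := hst' ▸ hnd
      exact fun hh => (List.disjoint_of_nodup_append hnd' hh (by simp)).elim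
    obtain ⟨h1, -⟩ := splice_eq hxl₁ hx' hst'
    exact ⟨s, t₁, by rw [h1]⟩

end InfixLemmas

namespace ParentTree
variable {V : Type} (T : ParentTree V)

lemma iterate_root (k : ℕ) : T.parent^[k] T.root = T.root := by
  induction k with
  | zero => rfl
  | succ n ih => rw [Function.iterate_succ_apply', ih, T.parent_root]

lemma eq_root_of_cycle {x : V} {k : ℕ} (hk : 0 < k) (h : T.parent^[k] x = x) :
    x = T.root := by
  obtain ⟨j, hj⟩ := T.reaches_root x
  have hcyc : ∀ n : ℕ, T.parent^[k * n] x = x := by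
    intro n
    induction n with
    | zero => rfl
    | succ n ih => rw [Nat.mul_succ, Function.iterate_add_apply, h, ih]
  have hbig : ∀ i, j ≤ i → T.parent^[i] x = T.root := by
    intro i hi
    have : T.parent^[(i - j) + j] x = T.root := by
      rw [Function.iterate_add_apply, hj]
      exact T.iterate_root _
    rwa [Nat.sub_add_cancel hi] at this
  have := hbig (k * (j + 1)) (by calc j ≤ k * j := Nat.le_mul_of_pos_left _ hk
                                    _ ≤ k * (j+1) := Nat.mul_le_mul_left _ (by omega))
  rw [hcyc (j+1)] at this
  exact this

lemma mem_desc_self (w : V) : w ∈ T.desc w := ⟨0, rfl⟩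

lemma desc_trans {x y z : V} (hxy : x ∈ T.desc y) (hyz : y ∈ T.desc z) :
    x ∈ T.desc z := by
  obtain ⟨k, hk⟩ := hxy; obtain ⟨j, hj⟩ := hyz
  exact ⟨j + k, by rw [Function.iterate_add_apply, hk, hj]⟩

lemma desc_subset {y z : V} (hyz : y ∈ T.desc z) : T.desc y ⊆ T.desc z :=
  fun _ hx => T.desc_trans hx hyz

lemma child_desc_subset {c w : V} (hc : c ∈ T.children w) : T.desc c ⊆ T.desc w :=
  T.desc_subset ⟨1, by simpa using hc.1⟩

lemma not_mem_desc_child {c w : V} (hc : c ∈ T.children w) : w ∉ T.desc c := by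
  rintro ⟨k, hk⟩
  have hcyc : T.parent^[k + 1] w = w := by
    rw [Function.iterate_succ_apply', hk, hc.1]
  have hw : w = T.root := T.eq_root_of_cycle (Nat.succ_pos k) hcyc
  have : c = T.root := by rw [← hw, ← hk, hw, T.iterate_root]
  exact hc.2 (by rw [this, ← hw])

lemma mem_desc_child {x w : V} (hx : x ∈ T.desc w) (hxw : x ≠ w) :
    ∃ c ∈ T.children w, x ∈ T.desc c := by
  obtain ⟨k, hk⟩ := hx
  induction k generalizing x with
  | zero => exact absurd hk hxw
  | succ n ih =>
    rw [Function.iterate_succ_apply'] at hk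
    set c := T.parent^[n] x with hc
    by_cases hcw : c = w
    · exact ih hxw (by rw [← hc, hcw])
    · exact ⟨c, ⟨hk, hcw⟩, ⟨n, rfl⟩⟩

lemma sibling_disjoint_aux {c c' w : V} (hc : c ∈ T.children w) (hc' : c' ∈ T.children w)
    (hne : c ≠ c') {x : V} {k j : ℕ} (hkj : k ≤ j)
    (hk : T.parent^[k] x = c) (hj : T.parent^[j] x = c') : False := by
  have hcc' : T.parent^[j - k] c = c' := by
    rw [← hk, ← Function.iterate_add_apply, Nat.sub_add_cancel hkj, hj]
  rcases Nat.eq_zero_or_pos (j - k) with h0 | hpos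
  · rw [h0] at hcc'; exact hne hcc'
  · obtain ⟨i, hi⟩ := Nat.exists_eq_add_of_lt hpos
    -- j - k = i + 1
    have hi' : j - k = i + 1 := by omega
    have hc'w : T.parent^[i] w = c' := by
      rw [← hcc', hi', Function.iterate_succ_apply, hc.1]
    have hcycw : T.parent^[i + 1] w = w := by
      rw [Function.iterate_succ_apply', hc'w, hc'.1]
    have hw : w = T.root := T.eq_root_of_cycle (Nat.succ_pos i) hcycw
    have : c' = T.root := by rw [← hc'w, hw, T.iterate_root]
    exact hc'.2 (by rw [this, ← hw])

lemma sibling_disjoint {c c' w : V} (hc : c ∈ T.children w) (hc' : c' ∈ T.children w)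
    (hne : c ≠ c') : Disjoint (T.desc c) (T.desc c') := by
  rw [Set.disjoint_left]
  rintro x ⟨k, hk⟩ ⟨j, hj⟩
  rcases le_total k j with h | h
  · exact T.sibling_disjoint_aux hc hc' hne h hk hj
  · exact T.sibling_disjoint_aux hc' hc (Ne.symm hne) h hj hk

lemma desc_eq_union (w : V) : T.desc w = {w} ∪ T.descU (T.children w) := by
  ext x
  constructor
  · intro hx
    by_cases hxw : x = w
    · exact Or.inl hxw
    · obtain ⟨c, hc, hxc⟩ := T.mem_desc_child hx hxw
      exact Or.inr (Set.mem_biUnion hc hxc)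
  · rintro (rfl | hx)
    · exact T.mem_desc_self x
    · obtain ⟨c, hc, hxc⟩ := Set.mem_iUnion₂.mp hx
      exact T.child_desc_subset hc hxc

lemma descU_subset_desc {Ws : Set V} {w : V} (hWs : Ws ⊆ T.children w) :
    T.descU Ws ⊆ T.desc w := by
  intro x hx
  obtain ⟨c, hc, hxc⟩ := Set.mem_iUnion₂.mp hx
  exact T.child_desc_subset (hWs hc) hxc

lemma descU_mono {Ws Ws' : Set V} (h : Ws ⊆ Ws') : T.descU Ws ⊆ T.descU Ws' := by
  intro x hx
  obtain ⟨c, hc, hxc⟩ := Set.mem_iUnion₂.mp hx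
  exact Set.mem_biUnion (h hc) hxc

lemma descU_union (A B : Set V) : T.descU (A ∪ B) = T.descU A ∪ T.descU B := by
  rw [descU, Set.biUnion_union]; rfl

lemma descU_insert (a : V) (A : Set V) : T.descU (insert a A) = T.desc a ∪ T.descU A := by
  simp [descU, Set.biUnion_insert]

lemma descU_disjoint {Ws Ws' : Set V} {w : V} (hWs : Ws ⊆ T.children w)
    (hWs' : Ws' ⊆ T.children w) (hd : Disjoint Ws Ws') :
    Disjoint (T.descU Ws) (T.descU Ws') := by
  rw [Set.disjoint_left]
  intro x hx hx'
  obtain ⟨c, hc, hxc⟩ := Set.mem_iUnion₂.mp hx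
  obtain ⟨c', hc', hxc'⟩ := Set.mem_iUnion₂.mp hx'
  have hne : c ≠ c' := fun h => (Set.disjoint_left.mp hd hc) (h ▸ hc')
  exact Set.disjoint_left.mp (T.sibling_disjoint (hWs hc) (hWs' hc') hne) hxc hxc'

lemma not_mem_descU_child {w : V} {Ws : Set V} (hWs : Ws ⊆ T.children w) :
    w ∉ T.descU Ws := by
  intro hx
  obtain ⟨c, hc, hxc⟩ := Set.mem_iUnion₂.mp hx
  exact T.not_mem_desc_child (hWs hc) hxc

/-- v a child of u, c a different child of u: desc v disjoint from descU of other children -/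
lemma desc_disjoint_descU {u v : V} {Vs : Set V} (hVs : Vs ⊆ T.children u)
    (hv : v ∈ T.children u) (hvVs : v ∉ Vs) : Disjoint (T.desc v) (T.descU Vs) := by
  rw [Set.disjoint_left]
  intro x hx hx'
  obtain ⟨c, hc, hxc⟩ := Set.mem_iUnion₂.mp hx'
  have hne : v ≠ c := fun h => hvVs (h ▸ hc)
  exact Set.disjoint_left.mp (T.sibling_disjoint hv (hVs hc) hne) hx hxc

lemma not_root_mem_desc_child' {u v : V} (hv : v ∈ T.children u) : u ∉ T.desc v :=
  T.not_mem_desc_child hv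

end ParentTree

namespace ParentTree
variable {V : Type} [Fintype V] (T : ParentTree V)

noncomputable def descCard (w : V) : ℕ := (Set.toFinite (T.desc w)).toFinset.card

lemma descCard_lt {c w : V} (hc : c ∈ T.children w) : T.descCard c < T.descCard w := by
  apply Finset.card_lt_card
  rw [Finset.ssubset_iff_of_subset]
  · exact ⟨w, by simp [Set.Finite.mem_toFinset]; exact ⟨T.mem_desc_self w, T.not_mem_desc_child hc⟩⟩
  · intro x hx
    rw [Set.Finite.mem_toFinset] at hx ⊢
    exact T.child_desc_subset hc hx

noncomputable def chl (w : V) : List V := (Set.toFinite (T.children w)).toFinset.toList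

lemma mem_chl {w c : V} : c ∈ T.chl w ↔ c ∈ T.children w := by
  rw [chl, Finset.mem_toList, Set.Finite.mem_toFinset]

lemma chl_nodup (w : V) : (T.chl w).Nodup := Finset.nodup_toList _

noncomputable def chlOut (a w : V) : List V :=
  (Set.toFinite {c | c ∈ T.children w ∧ a ∉ T.desc c}).toFinset.toList

noncomputable def chlIn (a w : V) : List V :=
  (Set.toFinite {c | c ∈ T.children w ∧ a ∈ T.desc c}).toFinset.toList

lemma mem_chlOut {a w c : V} : c ∈ T.chlOut a w ↔ c ∈ T.children w ∧ a ∉ T.desc c := by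
  rw [chlOut, Finset.mem_toList, Set.Finite.mem_toFinset]; rfl

lemma mem_chlIn {a w c : V} : c ∈ T.chlIn a w ↔ c ∈ T.children w ∧ a ∈ T.desc c := by
  rw [chlIn, Finset.mem_toList, Set.Finite.mem_toFinset]; rfl

noncomputable def dfsF : ℕ → V → List V
  | 0, w => [w]
  | (n+1), w => w :: ((T.chl w).map (dfsF n)).flatten

open Classical in
noncomputable def endF (a : V) : ℕ → V → List V
  | 0, w => [w]
  | (n+1), w =>
      if a = w then ((T.chl w).map (dfsF T n)).flatten ++ [w]
      else w :: (((T.chlOut a w).map (dfsF T n)).flatten ++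
                 ((T.chlIn a w).map (endF a n)).flatten)

end ParentTree

namespace ParentTree
variable {V : Type} [Fintype V] (T : ParentTree V)

lemma descCard_pos (w : V) : 0 < T.descCard w := by
  rw [descCard, Finset.card_pos]
  exact ⟨w, by rw [Set.Finite.mem_toFinset]; exact T.mem_desc_self w⟩

lemma flatten_blocks (cs : List V) (g : V → List V) (hnd : cs.Nodup)
    (hdisj : cs.Pairwise fun c c' => Disjoint (T.desc c) (T.desc c'))
    (hb : ∀ c ∈ cs, (g c).Nodup ∧ listSet (g c) = T.desc c) :
    ((cs.map g).flatten.Nodup) ∧ (listSet (cs.map g).flatten = ⋃ c ∈ cs, T.desc c) ∧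
    ∀ c ∈ cs, g c <:+: (cs.map g).flatten := by
  refine ⟨?_, ?_, ?_⟩
  · rw [List.nodup_flatten]
    constructor
    · intro l hl
      obtain ⟨c, hc, rfl⟩ := List.mem_map.mp hl
      exact (hb c hc).1
    · rw [List.pairwise_map]
      refine hdisj.imp_of_mem ?_
      intro c c' hc hc' hd x hx hx'
      have h1 : x ∈ T.desc c := by rw [← (hb c hc).2]; exact hx
      have h2 : x ∈ T.desc c' := by rw [← (hb c' hc').2]; exact hx'
      exact Set.disjoint_left.mp hd h1 h2
  · rw [listSet_flatten]
    ext x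
    simp only [Set.mem_iUnion, List.mem_map]
    constructor
    · rintro ⟨l, ⟨c, hc, rfl⟩, hx⟩
      exact ⟨c, hc, by rw [← (hb c hc).2]; exact hx⟩
    · rintro ⟨c, hc, hx⟩
      exact ⟨g c, ⟨c, hc, rfl⟩, by rw [mem_listSet, ← mem_listSet, (hb c hc).2]; exact hx⟩
  · intro c hc
    exact List.infix_of_mem_flatten (List.mem_map_of_mem (f := g) hc)

lemma biUnion_chl (w : V) : (⋃ c ∈ T.chl w, T.desc c) = T.descU (T.children w) := by
  ext x
  simp only [descU, Set.mem_iUnion]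
  constructor
  · rintro ⟨c, hc, hx⟩; exact ⟨c, T.mem_chl.mp hc, hx⟩
  · rintro ⟨c, hc, hx⟩; exact ⟨c, T.mem_chl.mpr hc, hx⟩

lemma chl_pairwise_disjoint (w : V) :
    (T.chl w).Pairwise fun c c' => Disjoint (T.desc c) (T.desc c') := by
  refine (T.chl_nodup w).imp_of_mem ?_
  intro c c' hc hc' hne
  exact T.sibling_disjoint (T.mem_chl.mp hc) (T.mem_chl.mp hc') hne

lemma dfsF_spec : ∀ n, ∀ w : V, T.descCard w ≤ n →
    (T.dfsF n w).head? = some w ∧ (T.dfsF n w).Nodup ∧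
    listSet (T.dfsF n w) = T.desc w ∧
    ∀ w' ∈ T.desc w, ∃ m, m <:+: T.dfsF n w ∧ listSet m = T.desc w'
  | 0, w, hw => absurd hw (by have := T.descCard_pos w; omega)
  | (n+1), w, hw => by
    have hb : ∀ c ∈ T.chl w, (T.dfsF n c).Nodup ∧ listSet (T.dfsF n c) = T.desc c := by
      intro c hc
      have := dfsF_spec n c (by
        have := T.descCard_lt (T.mem_chl.mp hc); omega)
      exact ⟨this.2.1, this.2.2.1⟩
    obtain ⟨hnd, hset, hinf⟩ :=
      T.flatten_blocks (T.chl w) (T.dfsF n) (T.chl_nodup w) (T.chl_pairwise_disjoint w) hb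
    have hwnot : w ∉ ((T.chl w).map (T.dfsF n)).flatten := by
      intro hmem
      have : w ∈ T.descU (T.children w) := by
        rw [← T.biUnion_chl, ← hset]; exact hmem
      exact T.not_mem_descU_child (le_refl _) this
    have hset' : listSet (T.dfsF (n+1) w) = T.desc w := by
      show listSet (w :: ((T.chl w).map (T.dfsF n)).flatten) = T.desc w
      rw [listSet_cons, hset, biUnion_chl, ← Set.singleton_union, ← T.desc_eq_union w]
    refine ⟨rfl, ?_, hset', ?_⟩
    · exact List.Nodup.cons hwnot hnd
    · intro w' hw'
      by_cases hww : w' = w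
      · exact ⟨T.dfsF (n+1) w, List.infix_refl _, by rw [hset', hww]⟩
      · obtain ⟨c, hc, hwc⟩ := T.mem_desc_child hw' hww
        have hcard : T.descCard c ≤ n := by have := T.descCard_lt hc; omega
        obtain ⟨-, -, -, hspec⟩ := dfsF_spec n c hcard
        obtain ⟨m, hm1, hm2⟩ := hspec w' hwc
        refine ⟨m, ?_, hm2⟩
        have h1 : T.dfsF n c <:+: ((T.chl w).map (T.dfsF n)).flatten :=
          hinf c (T.mem_chl.mpr hc)
        have h2 : ((T.chl w).map (T.dfsF n)).flatten <:+: T.dfsF (n+1) w := by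
          show _ <:+: w :: _
          exact (List.suffix_cons _ _).isInfix
        exact hm1.trans (h1.trans h2)

end ParentTree

lemma nodup_singleton_of_all_eq {V : Type} {l : List V} {c : V} (hc : c ∈ l)
    (hall : ∀ x ∈ l, x = c) (hnd : l.Nodup) : l = [c] := by
  cases l with
  | nil => cases hc
  | cons b t =>
    have hb : b = c := hall b List.mem_cons_self
    subst hb
    have : t = [] := by
      cases t with
      | nil => rfl
      | cons y t' =>
        have hy : y = b := hall y (by simp)
        rw [List.nodup_cons] at hnd
        exact absurd (by rw [← hy]; simp : b ∈ y :: t') hnd.1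
    rw [this]

namespace ParentTree
variable {V : Type} [Fintype V] (T : ParentTree V)

lemma chlOut_append_chlIn_nodup (a w : V) : (T.chlOut a w ++ T.chlIn a w).Nodup := by
  rw [List.nodup_append]
  refine ⟨Finset.nodup_toList _, Finset.nodup_toList _, ?_⟩
  intro c hc _ hc' rfl
  rw [T.mem_chlOut] at hc
  rw [T.mem_chlIn] at hc'
  exact hc.2 hc'.2

lemma chlOut_append_chlIn_set (a w : V) :
    (⋃ c ∈ (T.chlOut a w ++ T.chlIn a w), T.desc c) = T.descU (T.children w) := by
  ext x
  simp only [Set.mem_iUnion, descU, List.mem_append]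
  constructor
  · rintro ⟨c, hc | hc, hx⟩
    · exact ⟨c, (T.mem_chlOut.mp hc).1, hx⟩
    · exact ⟨c, (T.mem_chlIn.mp hc).1, hx⟩
  · rintro ⟨c, hc, hxc⟩
    by_cases ha : a ∈ T.desc c
    · exact ⟨c, Or.inr (T.mem_chlIn.mpr ⟨hc, ha⟩), hxc⟩
    · exact ⟨c, Or.inl (T.mem_chlOut.mpr ⟨hc, ha⟩), hxc⟩

lemma chlOut_chlIn_pairwise (a w : V) :
    (T.chlOut a w ++ T.chlIn a w).Pairwise fun c c' => Disjoint (T.desc c) (T.desc c') := by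
  refine (T.chlOut_append_chlIn_nodup a w).imp_of_mem ?_
  intro c c' hc hc' hne
  have hcw : c ∈ T.children w := by
    rcases List.mem_append.mp hc with h | h
    · exact (T.mem_chlOut.mp h).1
    · exact (T.mem_chlIn.mp h).1
  have hcw' : c' ∈ T.children w := by
    rcases List.mem_append.mp hc' with h | h
    · exact (T.mem_chlOut.mp h).1
    · exact (T.mem_chlIn.mp h).1
  exact T.sibling_disjoint hcw hcw' hne

lemma chlIn_singleton {a w : V} (ha : a ∈ T.desc w) (hne : a ≠ w) :
    ∃ c, T.chlIn a w = [c] ∧ c ∈ T.children w ∧ a ∈ T.desc c := by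
  obtain ⟨c, hc, hac⟩ := T.mem_desc_child ha hne
  have hcmem : c ∈ T.chlIn a w := T.mem_chlIn.mpr ⟨hc, hac⟩
  refine ⟨c, ?_, hc, hac⟩
  apply nodup_singleton_of_all_eq hcmem ?_ (Finset.nodup_toList _)
  intro x hx
  rw [T.mem_chlIn] at hx
  by_contra hxc
  exact Set.disjoint_left.mp (T.sibling_disjoint hx.1 hc hxc) hx.2 hac

lemma endF_spec : ∀ n, ∀ a w : V, a ∈ T.desc w → T.descCard w ≤ n →
    (T.endF a n w).getLast? = some a ∧ (T.endF a n w).Nodup ∧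
    listSet (T.endF a n w) = T.desc w ∧
    ∀ w' ∈ T.desc w, ∃ m, m <:+: T.endF a n w ∧ listSet m = T.desc w'
  | 0, a, w, ha, hw => absurd hw (by have := T.descCard_pos w; omega)
  | (n+1), a, w, ha, hw => by
    have hbout : ∀ c ∈ T.chl w, (T.dfsF n c).Nodup ∧ listSet (T.dfsF n c) = T.desc c := by
      intro c hc
      have := T.dfsF_spec n c (by have := T.descCard_lt (T.mem_chl.mp hc); omega)
      exact ⟨this.2.1, this.2.2.1⟩
    by_cases haw : a = w
    · -- endF = flatten ++ [w]
      have heq : T.endF a (n+1) w = ((T.chl w).map (T.dfsF n)).flatten ++ [w] := by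
        rw [endF, if_pos haw]
      obtain ⟨hnd, hset, hinf⟩ :=
        T.flatten_blocks (T.chl w) (T.dfsF n) (T.chl_nodup w) (T.chl_pairwise_disjoint w) hbout
      have hwnot : w ∉ ((T.chl w).map (T.dfsF n)).flatten := by
        intro hmem
        have : w ∈ T.descU (T.children w) := by rw [← T.biUnion_chl, ← hset]; exact hmem
        exact T.not_mem_descU_child (le_refl _) this
      have hset' : listSet (T.endF a (n+1) w) = T.desc w := by
        rw [heq, listSet_append, hset, biUnion_chl, listSet_singleton,
          Set.union_comm, ← T.desc_eq_union w]
      refine ⟨?_, ?_, hset', ?_⟩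
      · rw [heq, List.getLast?_append]; simp [haw]
      · rw [heq, List.nodup_append]
        exact ⟨hnd, List.nodup_singleton _, by
          intro x hx _ hx' rfl
          rw [List.mem_singleton] at hx'
          exact hwnot (hx' ▸ hx)⟩
      · intro w' hw'
        by_cases hww : w' = w
        · exact ⟨T.endF a (n+1) w, List.infix_refl _, by rw [hset', hww]⟩
        · obtain ⟨c, hc, hwc⟩ := T.mem_desc_child hw' hww
          have hcard : T.descCard c ≤ n := by have := T.descCard_lt hc; omega
          obtain ⟨-, -, -, hspec⟩ := T.dfsF_spec n c hcard
          obtain ⟨m, hm1, hm2⟩ := hspec w' hwc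
          refine ⟨m, ?_, hm2⟩
          have h1 : T.dfsF n c <:+: ((T.chl w).map (T.dfsF n)).flatten :=
            hinf c (T.mem_chl.mpr hc)
          exact hm1.trans (h1.trans (by rw [heq]; exact (List.prefix_append _ _).isInfix))
    · -- a ≠ w
      obtain ⟨ca, hca_eq, hca_ch, hca_desc⟩ := T.chlIn_singleton ha (Ne.symm haw ∘ Eq.symm)
      have hcard_ca : T.descCard ca ≤ n := by have := T.descCard_lt hca_ch; omega
      obtain ⟨hlast_ca, hnd_ca, hset_ca, hspec_ca⟩ := endF_spec n a ca hca_desc hcard_ca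
      -- the combined child list and block function
      classical
      set g : V → List V := fun c => if a ∈ T.desc c then T.endF a n c else T.dfsF n c with hg
      have hb : ∀ c ∈ (T.chlOut a w ++ T.chlIn a w),
          (g c).Nodup ∧ listSet (g c) = T.desc c := by
        intro c hc
        rcases List.mem_append.mp hc with h | h
        · rw [T.mem_chlOut] at h
          rw [hg]; simp only [if_neg h.2]
          exact hbout c (T.mem_chl.mpr h.1)
        · rw [hca_eq, List.mem_singleton] at h
          subst h
          rw [hg]; simp only [if_pos hca_desc]
          exact ⟨hnd_ca, hset_ca⟩
      obtain ⟨hnd, hset, hinf⟩ := T.flatten_blocks _ g (T.chlOut_append_chlIn_nodup a w)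
        (T.chlOut_chlIn_pairwise a w) hb
      have heq : T.endF a (n+1) w = w :: ((T.chlOut a w ++ T.chlIn a w).map g).flatten := by
        rw [endF, if_neg haw]
        congr 1
        rw [List.map_append, List.flatten_append]
        congr 1
        · congr 1
          apply List.map_congr_left
          intro c hc
          rw [T.mem_chlOut] at hc
          rw [hg]; simp only [if_neg hc.2]
        · congr 1
          apply List.map_congr_left
          intro c hc
          rw [T.mem_chlIn] at hc
          rw [hg]; simp only [if_pos hc.2]
      have hwnot : w ∉ ((T.chlOut a w ++ T.chlIn a w).map g).flatten := by
        intro hmem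
        have : w ∈ T.descU (T.children w) := by
          rw [← T.chlOut_append_chlIn_set a w, ← hset]; exact hmem
        exact T.not_mem_descU_child (le_refl _) this
      have hset' : listSet (T.endF a (n+1) w) = T.desc w := by
        rw [heq, listSet_cons, hset, chlOut_append_chlIn_set,
          ← Set.singleton_union, ← T.desc_eq_union w]
      refine ⟨?_, ?_, hset', ?_⟩
      · -- getLast?
        rw [heq, List.map_append, List.flatten_append]
        have hgca : (T.chlIn a w).map g = [T.endF a n ca] := by
          rw [hca_eq]; simp only [List.map_cons, List.map_nil, hg, if_pos hca_desc]
        rw [hgca]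
        have : ((T.chlOut a w).map g).flatten ++ [T.endF a n ca].flatten
            = ((T.chlOut a w).map g).flatten ++ T.endF a n ca := by simp
        rw [this]
        have hne_ca : T.endF a n ca ≠ [] := by
          intro h; rw [h] at hlast_ca; simp at hlast_ca
        rw [show (w :: (((T.chlOut a w).map g).flatten ++ T.endF a n ca))
            = (w :: ((T.chlOut a w).map g).flatten) ++ T.endF a n ca by simp,
          List.getLast?_append, hlast_ca]
        rfl
      · rw [heq]
        exact List.Nodup.cons hwnot hnd
      · intro w' hw'
        by_cases hww : w' = w
        · exact ⟨T.endF a (n+1) w, List.infix_refl _, by rw [hset', hww]⟩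
        · obtain ⟨c, hc, hwc⟩ := T.mem_desc_child hw' hww
          have hcard : T.descCard c ≤ n := by have := T.descCard_lt hc; omega
          have hcmem : c ∈ T.chlOut a w ++ T.chlIn a w := by
            rw [List.mem_append, T.mem_chlOut, T.mem_chlIn]
            by_cases hac : a ∈ T.desc c
            · exact Or.inr ⟨hc, hac⟩
            · exact Or.inl ⟨hc, hac⟩
          have hblock : ∃ m, m <:+: g c ∧ listSet m = T.desc w' := by
            rw [hg]
            by_cases hac : a ∈ T.desc c
            · simp only [if_pos hac]
              obtain ⟨-, -, -, hspec⟩ := endF_spec n a c hac hcard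
              exact hspec w' hwc
            · simp only [if_neg hac]
              obtain ⟨-, -, -, hspec⟩ := T.dfsF_spec n c hcard
              exact hspec w' hwc
          obtain ⟨m, hm1, hm2⟩ := hblock
          refine ⟨m, ?_, hm2⟩
          have h1 := hinf c hcmem
          exact hm1.trans (h1.trans (by rw [heq]; exact (List.suffix_cons _ _).isInfix))

end ParentTree

section Constructions
variable {V : Type} [Fintype V] (T : ParentTree V)

lemma biUnion_toList (s : Set V) :
    (⋃ c ∈ (Set.toFinite s).toFinset.toList, T.desc c) = T.descU s := by
  ext x
  simp only [Set.mem_iUnion, ParentTree.descU, Finset.mem_toList, Set.Finite.mem_toFinset]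

lemma mem_toList {s : Set V} {c : V} : c ∈ (Set.toFinite s).toFinset.toList ↔ c ∈ s := by
  rw [Finset.mem_toList, Set.Finite.mem_toFinset]

/-- Construction of a conforming path witnessing nonemptiness of the DW set. -/
lemma exists_DW_path {u v : V} {Vs W : Set V}
    (hVs : Vs ⊆ T.children u) (hv : v ∈ T.children u) (hvVs : v ∉ Vs)
    (hW : W ⊆ T.children v) :
    ∃ l : List V, l.Nodup ∧ l.head? = some u ∧ l.getLast? = some v ∧
      listSet l = {u} ∪ T.descU Vs ∪ T.descU W ∪ {v} ∧ PathConforms T l ∧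
      (∃ l₁ l₂ : List V, l = l₁ ++ l₂ ∧ listSet l₁ = {u} ∪ T.descU Vs) := by
  classical
  set N := Fintype.card V with hN
  have hfuel : ∀ c : V, T.descCard c ≤ N := fun c => Finset.card_le_univ _
  set VsL := (Set.toFinite Vs).toFinset.toList with hVsL
  set WL := (Set.toFinite W).toFinset.toList with hWL
  set g : V → List V := T.dfsF N with hg
  set J := ((VsL ++ WL).map g).flatten with hJ
  set l := u :: (J ++ [v]) with hl
  have huv : u ≠ v := fun h => hv.2 h.symm
  have hVsch : ∀ c ∈ VsL, c ∈ T.children u := fun c hc => hVs (mem_toList.mp hc)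
  have hWch : ∀ c ∈ WL, c ∈ T.children v := fun c hc => hW (mem_toList.mp hc)
  have hcsnd : (VsL ++ WL).Nodup := by
    rw [List.nodup_append]
    refine ⟨Finset.nodup_toList _, Finset.nodup_toList _, ?_⟩
    intro c hc _ hc' rfl
    exact huv ((hVsch c hc).1.symm.trans (hWch c hc').1)
  have hdisj : (VsL ++ WL).Pairwise (fun c c' => Disjoint (T.desc c) (T.desc c')) := by
    rw [List.pairwise_append]
    refine ⟨?_, ?_, ?_⟩
    · refine (Finset.nodup_toList _).imp_of_mem ?_
      intro c c' hc hc' hne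
      exact T.sibling_disjoint (hVsch c hc) (hVsch c' hc') hne
    · refine (Finset.nodup_toList _).imp_of_mem ?_
      intro c c' hc hc' hne
      exact T.sibling_disjoint (hWch c hc) (hWch c' hc') hne
    · intro c hc c' hc'
      have hcv : c ≠ v := fun h => hvVs (h ▸ mem_toList.mp hc)
      have h1 : Disjoint (T.desc c) (T.desc v) := T.sibling_disjoint (hVsch c hc) hv hcv
      exact h1.mono_right (T.child_desc_subset (hWch c' hc'))
  have hb : ∀ c ∈ VsL ++ WL, (g c).Nodup ∧ listSet (g c) = T.desc c := by
    intro c _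
    have := T.dfsF_spec N c (hfuel c)
    exact ⟨this.2.1, this.2.2.1⟩
  obtain ⟨hndJ, hsetJ, hinfJ⟩ := T.flatten_blocks (VsL ++ WL) g hcsnd hdisj hb
  obtain ⟨hndV, hsetV, -⟩ := T.flatten_blocks VsL g (List.Nodup.of_append_left hcsnd)
    ((List.pairwise_append.mp hdisj).1) (fun c hc => hb c (List.mem_append_left _ hc))
  obtain ⟨hndW, hsetW, -⟩ := T.flatten_blocks WL g (List.Nodup.of_append_right hcsnd)
    ((List.pairwise_append.mp hdisj).2.1) (fun c hc => hb c (List.mem_append_right _ hc))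
  have hsetV' : listSet ((VsL.map g).flatten) = T.descU Vs := by
    rw [hsetV, hVsL, biUnion_toList]
  have hsetW' : listSet ((WL.map g).flatten) = T.descU W := by
    rw [hsetW, hWL, biUnion_toList]
  have hJset : listSet J = T.descU Vs ∪ T.descU W := by
    rw [hJ, List.map_append, List.flatten_append, listSet_append, hsetV', hsetW']
  -- membership facts
  have huVs : u ∉ T.descU Vs := T.not_mem_descU_child hVs
  have hudv : u ∉ T.desc v := T.not_mem_desc_child hv
  have hdWv : T.descU W ⊆ T.desc v := T.descU_subset_desc hW
  have huW : u ∉ T.descU W := fun h => hudv (hdWv h)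
  have hdisjVsv : Disjoint (T.desc v) (T.descU Vs) := T.desc_disjoint_descU hVs hv hvVs
  have hvVs' : v ∉ T.descU Vs := fun h => Set.disjoint_left.mp hdisjVsv (T.mem_desc_self v) h
  have hvW : v ∉ T.descU W := T.not_mem_descU_child hW
  have hvJ : v ∉ J := by
    intro h
    have : v ∈ T.descU Vs ∪ T.descU W := by rw [← hJset]; exact h
    rcases this with h | h
    · exact hvVs' h
    · exact hvW h
  have huJ : u ∉ J := by
    intro h
    have : u ∈ T.descU Vs ∪ T.descU W := by rw [← hJset]; exact h
    rcases this with h | h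
    · exact huVs h
    · exact huW h
  have hlset : listSet l = {u} ∪ T.descU Vs ∪ T.descU W ∪ {v} := by
    rw [hl, listSet_cons, listSet_append, hJset, listSet_singleton]
    ext x
    simp only [Set.mem_insert_iff, Set.mem_union, Set.mem_singleton_iff]
    tauto
  have hJl : J <:+: l := ⟨[u], [v], by rw [hl]; simp⟩
  refine ⟨l, ?_, rfl, ?_, hlset, ?_, ?_⟩
  · -- nodup
    rw [hl, List.nodup_cons, List.nodup_append]
    refine ⟨?_, hndJ, List.nodup_singleton _, ?_⟩
    · intro h
      rcases List.mem_append.mp h with h | h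
      · exact huJ h
      · exact huv (List.mem_singleton.mp h)
    · intro x hx _ hx' rfl
      rw [List.mem_singleton] at hx'
      exact hvJ (hx' ▸ hx)
  · -- getLast?
    rw [hl, show u :: (J ++ [v]) = (u :: J) ++ [v] by simp, List.getLast?_concat]
  · -- conforms
    intro w' hsub
    have hw'mem : w' ∈ listSet l := hsub (T.mem_desc_self w')
    rw [hlset] at hw'mem
    have hblock : ∀ c, c ∈ VsL ++ WL → w' ∈ T.desc c → ConsecutiveIn (T.desc w') l := by
      intro c hc hwc
      obtain ⟨-, -, -, hspec⟩ := T.dfsF_spec N c (hfuel c)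
      obtain ⟨m, hm1, hm2⟩ := hspec w' hwc
      exact ⟨m, hm1.trans ((hinfJ c hc).trans hJl), hm2⟩
    rcases hw'mem with ((hw' | hw') | hw') | hw'
    · -- w' = u
      subst hw'
      refine ⟨l, List.infix_refl _, Set.Subset.antisymm ?_ hsub⟩
      rw [hlset]
      intro x hx
      rcases hx with ((hx | hx) | hx) | hx
      · exact hx ▸ T.mem_desc_self _
      · exact T.descU_subset_desc hVs hx
      · exact T.child_desc_subset hv (hdWv hx)
      · exact hx ▸ T.child_desc_subset hv (T.mem_desc_self v)
    · obtain ⟨c, hc, hwc⟩ := Set.mem_iUnion₂.mp hw'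
      exact hblock c (List.mem_append_left _ (mem_toList.mpr hc)) hwc
    · obtain ⟨c, hc, hwc⟩ := Set.mem_iUnion₂.mp hw'
      exact hblock c (List.mem_append_right _ (mem_toList.mpr hc)) hwc
    · -- w' = v
      have hwv : w' = v := hw'
      rw [hwv] at hsub ⊢
      refine ⟨(WL.map g).flatten ++ [v], ?_, ?_⟩
      · refine ⟨u :: (VsL.map g).flatten, [], ?_⟩
        rw [hl, hJ, List.map_append, List.flatten_append]
        simp
      · rw [listSet_append, hsetW', listSet_singleton]
        apply Set.Subset.antisymm
        · intro x hx
          rcases hx with hx | hx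
          · exact hdWv hx
          · exact hx ▸ T.mem_desc_self v
        · intro x hx
          have hxl : x ∈ listSet l := hsub hx
          rw [hlset] at hxl
          rcases hxl with ((hxl | hxl) | hxl) | hxl
          · exact absurd (hxl ▸ hx) hudv
          · exact absurd hx (Set.disjoint_right.mp hdisjVsv hxl)
          · exact Or.inl hxl
          · exact Or.inr hxl
  · -- prefix condition
    refine ⟨u :: (VsL.map g).flatten, (WL.map g).flatten ++ [v], ?_, ?_⟩
    · rw [hl, hJ, List.map_append, List.flatten_append]; simp
    · rw [listSet_cons, hsetV', Set.insert_eq]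

/-- Construction of a conforming path witnessing nonemptiness of the DD set
rooted at `v` over subtrees `W'`, ending at `a`. -/
lemma exists_DD_path {v a : V} {W' : Set V} (hW' : W' ⊆ T.children v)
    (haW' : a ∈ T.descU W') :
    ∃ l : List V, l.Nodup ∧ l.head? = some v ∧ l.getLast? = some a ∧
      listSet l = {v} ∪ T.descU W' ∧ PathConforms T l := by
  classical
  set N := Fintype.card V with hN
  have hfuel : ∀ c : V, T.descCard c ≤ N := fun c => Finset.card_le_univ _
  obtain ⟨ca, hca, haca⟩ := Set.mem_iUnion₂.mp haW'
  set W0L := (Set.toFinite (W' \ {ca})).toFinset.toList with hW0L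
  set g : V → List V := fun c => if c = ca then T.endF a N c else T.dfsF N c with hg
  set cs := W0L ++ [ca] with hcs
  set J := (cs.map g).flatten with hJ
  set l := v :: J with hl
  have hcsch : ∀ c ∈ cs, c ∈ T.children v := by
    intro c hc
    rcases List.mem_append.mp hc with h | h
    · exact hW' (mem_toList.mp h).1
    · exact hW' ((List.mem_singleton.mp h) ▸ hca)
  have hcs_mem : ∀ c, c ∈ cs ↔ c ∈ W' := by
    intro c
    rw [hcs, List.mem_append, List.mem_singleton, mem_toList]
    constructor
    · rintro (⟨h, -⟩ | rfl)
      · exact h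
      · exact hca
    · intro h
      by_cases hc : c = ca
      · exact Or.inr hc
      · exact Or.inl ⟨h, hc⟩
  have hcsnd : cs.Nodup := by
    rw [hcs, List.nodup_append]
    refine ⟨Finset.nodup_toList _, List.nodup_singleton _, ?_⟩
    intro c hc _ hc' rfl
    rw [List.mem_singleton] at hc'
    exact (mem_toList.mp hc).2 (Set.mem_singleton_iff.mpr hc')
  have hdisj : cs.Pairwise (fun c c' => Disjoint (T.desc c) (T.desc c')) := by
    refine hcsnd.imp_of_mem ?_
    intro c c' hc hc' hne
    exact T.sibling_disjoint (hcsch c hc) (hcsch c' hc') hne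
  obtain ⟨hlast_ca, hnd_ca, hset_ca, -⟩ := T.endF_spec N a ca haca (hfuel ca)
  have hb : ∀ c ∈ cs, (g c).Nodup ∧ listSet (g c) = T.desc c := by
    intro c hc
    rw [hg]
    by_cases h : c = ca
    · subst h; simp only [if_pos rfl]; exact ⟨hnd_ca, hset_ca⟩
    · simp only [if_neg h]
      have := T.dfsF_spec N c (hfuel c)
      exact ⟨this.2.1, this.2.2.1⟩
  obtain ⟨hndJ, hsetJ, hinfJ⟩ := T.flatten_blocks cs g hcsnd hdisj hb
  have hJset : listSet J = T.descU W' := by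
    rw [hJ, hsetJ]
    ext x
    simp only [Set.mem_iUnion, ParentTree.descU]
    constructor
    · rintro ⟨c, hc, hx⟩; exact ⟨c, (hcs_mem c).mp hc, hx⟩
    · rintro ⟨c, hc, hx⟩; exact ⟨c, (hcs_mem c).mpr hc, hx⟩
  have hdW'v : T.descU W' ⊆ T.desc v := T.descU_subset_desc hW'
  have hvW' : v ∉ T.descU W' := T.not_mem_descU_child hW'
  have hvJ : v ∉ J := fun h => hvW' (by rw [← hJset]; exact h)
  have hlset : listSet l = {v} ∪ T.descU W' := by
    rw [hl, listSet_cons, hJset, Set.insert_eq]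
  have hca_last : g ca = T.endF a N ca := by rw [hg]; simp
  refine ⟨l, ?_, rfl, ?_, hlset, ?_⟩
  · rw [hl, List.nodup_cons]
    exact ⟨hvJ, hndJ⟩
  · -- getLast?
    have hJeq : J = (W0L.map g).flatten ++ T.endF a N ca := by
      rw [hJ, hcs, List.map_append, List.flatten_append]
      simp [hca_last]
    rw [hl, hJeq, show v :: ((W0L.map g).flatten ++ T.endF a N ca)
        = (v :: (W0L.map g).flatten) ++ T.endF a N ca by simp, List.getLast?_append,
      hlast_ca]
    rfl
  · -- conforms
    intro w' hsub
    have hw'mem : w' ∈ listSet l := hsub (T.mem_desc_self w')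
    rw [hlset] at hw'mem
    have hJl : J <:+: l := (List.suffix_cons _ _).isInfix
    rcases hw'mem with hw' | hw'
    · -- w' = v : whole list
      subst hw'
      refine ⟨l, List.infix_refl _, Set.Subset.antisymm ?_ hsub⟩
      rw [hlset]
      intro x hx
      rcases hx with hx | hx
      · exact hx ▸ T.mem_desc_self _
      · exact hdW'v hx
    · obtain ⟨c, hc, hwc⟩ := Set.mem_iUnion₂.mp hw'
      have hcmem : c ∈ cs := (hcs_mem c).mpr hc
      have hblock : ∃ m, m <:+: g c ∧ listSet m = T.desc w' := by
        rw [hg]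
        by_cases h : c = ca
        · subst h; simp only [if_pos rfl]
          obtain ⟨-, -, -, hspec⟩ := T.endF_spec N a c haca (hfuel c)
          exact hspec w' hwc
        · simp only [if_neg h]
          obtain ⟨-, -, -, hspec⟩ := T.dfsF_spec N c (hfuel c)
          exact hspec w' hwc
      obtain ⟨m, hm1, hm2⟩ := hblock
      exact ⟨m, hm1.trans ((hinfJ c hcmem).trans hJl), hm2⟩

end Constructions

section Main
variable {V X : Type} [Fintype V] [MetricSpace X]

def DDpred (T : ParentTree V) (u : V) (Vs : Set V) (a : V) (l : List V) : Prop :=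
  l.Nodup ∧ l.head? = some u ∧ l.getLast? = some a ∧
    listSet l = {u} ∪ T.descU Vs ∧ PathConforms T l

def DWpred (T : ParentTree V) (u : V) (Vs : Set V) (v : V) (Ws : Set V) (l : List V) : Prop :=
  l.Nodup ∧ l.head? = some u ∧ l.getLast? = some v ∧
    listSet l = {u} ∪ T.descU Vs ∪ T.descU Ws ∪ {v} ∧ PathConforms T l ∧
    (∃ l₁ l₂ : List V, l = l₁ ++ l₂ ∧ listSet l₁ = {u} ∪ T.descU Vs)

lemma listSet_right_part {l₁ l₂ : List V} {A B : Set V} (hnd : (l₁ ++ l₂).Nodup)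
    (hset : listSet (l₁ ++ l₂) = A ∪ B) (h1 : listSet l₁ = A) (hAB : Disjoint A B) :
    listSet l₂ = B := by
  have hdisjl : l₁.Disjoint l₂ := List.disjoint_of_nodup_append hnd
  ext x
  constructor
  · intro hx
    have hxl : x ∈ listSet (l₁ ++ l₂) := by rw [listSet_append]; exact Or.inr hx
    rw [hset] at hxl
    rcases hxl with hxl | hxl
    · exact absurd hx (fun hh => hdisjl (by rw [← h1] at hxl; exact hxl) hh)
    · exact hxl
  · intro hx
    have hxl : x ∈ listSet (l₁ ++ l₂) := by rw [hset]; exact Or.inr hx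
    rw [listSet_append] at hxl
    rcases hxl with hxl | hxl
    · exact absurd (by rw [h1] at hxl; exact hxl) (fun hh => Set.disjoint_right.mp hAB hx hh)
    · exact hxl

lemma listSet_left_part {l₁ l₂ : List V} {A B : Set V} (hnd : (l₁ ++ l₂).Nodup)
    (hset : listSet (l₁ ++ l₂) = A ∪ B) (h2 : listSet l₂ = B) (hAB : Disjoint A B) :
    listSet l₁ = A := by
  have hnd' : (l₂.reverse ++ l₁.reverse).Nodup := by
    rw [← List.reverse_append, List.nodup_reverse]; exact hnd
  have hset' : listSet (l₂.reverse ++ l₁.reverse) = B ∪ A := by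
    rw [listSet_append]
    have e1 : listSet l₂.reverse = listSet l₂ := by ext x; simp [listSet]
    have e2 : listSet l₁.reverse = listSet l₁ := by ext x; simp [listSet]
    rw [e1, e2, Set.union_comm (listSet l₂) _, Set.union_comm B A, ← listSet_append, hset]
  have e2 : listSet l₁.reverse = listSet l₁ := by ext x; simp [listSet]
  have h2' : listSet l₂.reverse = B := by rw [← h2]; ext x; simp [listSet]
  have := listSet_right_part hnd' hset' h2' hAB.symm
  rw [← e2]; exact this

variable (T : ParentTree V) (f : V → X)

lemma weight_set_finite (Q : List V → Prop) (hQ : ∀ l, Q l → l.Nodup) :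
    {w | ∃ l, Q l ∧ pathWeight f l = w}.Finite := by
  have h1 : {l : List V | Q l}.Finite :=
    (List.finite_length_le V (Fintype.card V)).subset (fun l hl => (hQ l hl).length_le_card)
  have h2 : {w | ∃ l, Q l ∧ pathWeight f l = w} = pathWeight f '' {l | Q l} := by
    ext w; simp [Set.mem_image]
  rw [h2]; exact h1.image _

end Main

section Main2
variable {V X : Type} [Fintype V] [MetricSpace X] (T : ParentTree V) (f : V → X)
variable {u v : V} {Vs : Set V}

lemma mem_of_getLast?' {l : List V} {b : V} (h : l.getLast? = some b) : b ∈ l := by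
  obtain ⟨ys, rfl⟩ := List.getLast?_eq_some_iff.mp h
  simp

lemma head?_append_left {s r : List V} (h : s ≠ []) : (s ++ r).head? = s.head? := by
  cases s with
  | nil => exact absurd rfl h
  | cons x s' => rfl

lemma disj_head_desc (hVs : Vs ⊆ T.children u) (hv : v ∈ T.children u) (hvVs : v ∉ Vs) :
    Disjoint ({u} ∪ T.descU Vs) (T.desc v) := by
  rw [Set.disjoint_left]
  rintro x (hx | hx) hx'
  · exact T.not_mem_desc_child hv (hx ▸ hx')
  · exact Set.disjoint_right.mp (T.desc_disjoint_descU hVs hv hvVs) hx hx'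

lemma decompose_path (hVs : Vs ⊆ T.children u) (hv : v ∈ T.children u) (hvVs : v ∉ Vs)
    {a : V} (ha : a ∈ T.desc v) (hav : a ≠ v) {l : List V}
    (hl : DDpred T u (insert v Vs) a l) :
    ∃ (W W' : Set V) (p q : List V), W ∪ W' = T.children v ∧ Disjoint W W' ∧
      a ∈ T.descU W' ∧ DWpred T u Vs v W p ∧ DDpred T v W' a q ∧
      pathWeight f l = pathWeight f p + pathWeight f q := by
  obtain ⟨hnd, hhead, hlast, hset, hconf⟩ := hl
  have hsetl : listSet l = ({u} ∪ T.descU Vs) ∪ T.desc v := by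
    rw [hset, T.descU_insert]
    ext x; simp only [Set.mem_union, Set.mem_singleton_iff]; tauto
  have hdvsub : T.desc v ⊆ listSet l := by rw [hsetl]; exact Set.subset_union_right
  obtain ⟨m, hm, hmset⟩ := hconf v hdvsub
  -- m is a suffix of l
  obtain ⟨s, t, hst⟩ := hm
  have ht : t = [] := by
    by_contra htne
    obtain ⟨b, hb⟩ : ∃ b, t.getLast? = some b := by
      cases hbb : t.getLast? with
      | none => exact absurd (List.getLast?_eq_none_iff.mp hbb) htne
      | some y => exact ⟨y, rfl⟩
    have hlb : l.getLast? = some b := by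
      rw [← hst, show s ++ m ++ t = (s ++ m) ++ t by simp, List.getLast?_append, hb]; rfl
    have hba : b = a := by rw [hlast] at hlb; exact (Option.some_inj.mp hlb).symm
    have hbm : b ∈ m := by rw [← mem_listSet, hmset, hba]; exact ha
    have hbt : b ∈ t := mem_of_getLast?' hb
    have hnd' : ((s ++ m) ++ t).Nodup := by
      rw [show (s ++ m) ++ t = s ++ m ++ t by simp, hst]; exact hnd
    exact List.disjoint_of_nodup_append hnd' (List.mem_append_right _ hbm) hbt
  rw [ht, List.append_nil] at hst
  -- l = s ++ m with listSet m = desc v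
  have hnd_sm : (s ++ m).Nodup := hst ▸ hnd
  have hsset : listSet s = {u} ∪ T.descU Vs := by
    refine listSet_left_part hnd_sm ?_ hmset (disj_head_desc T hVs hv hvVs)
    rw [hst]
    exact hsetl
  -- find v in m
  have hvm : v ∈ m := by rw [← mem_listSet, hmset]; exact T.mem_desc_self v
  obtain ⟨m₁, m₂, hm12⟩ := List.append_of_mem hvm
  have hleq : l = (s ++ m₁) ++ v :: m₂ := by rw [← hst, hm12]; simp
  have hnd2 : ((s ++ m₁) ++ v :: m₂).Nodup := hleq ▸ hnd
  have hm2ne : m₂ ≠ [] := by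
    intro h
    rw [h] at hleq
    have : l.getLast? = some v := by
      rw [hleq, show (s ++ m₁) ++ [v] = (s ++ m₁) ++ [v] from rfl, List.getLast?_concat]
    rw [hlast] at this
    exact hav (Option.some_inj.mp this)
  have ham2 : a ∈ m₂ := by
    obtain ⟨b, hb⟩ : ∃ b, m₂.getLast? = some b := by
      cases hbb : m₂.getLast? with
      | none => exact absurd (List.getLast?_eq_none_iff.mp hbb) hm2ne
      | some y => exact ⟨y, rfl⟩
    have hlb : l.getLast? = some b := by
      rw [hleq, List.getLast?_append, show (v :: m₂).getLast? = m₂.getLast? by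
        rw [show v :: m₂ = [v] ++ m₂ by simp, List.getLast?_append, hb]; rfl, hb]; rfl
    rw [hlast] at hlb
    have hba : b = a := (Option.some_inj.mp hlb).symm
    exact hba ▸ mem_of_getLast?' hb
  -- nodup facts about m
  have hmnd : m.Nodup := (hst ▸ hnd : (s ++ m).Nodup).of_append_right
  have hm12nd : (m₁ ++ v :: m₂).Nodup := hm12 ▸ hmnd
  have hvm₁ : v ∉ m₁ := fun h =>
    List.disjoint_of_nodup_append hm12nd h (by simp)
  have hvm₂ : v ∉ m₂ := by
    have := hm12nd.of_append_right
    rw [List.nodup_cons] at this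
    exact this.1
  have hm₁m₂ : ∀ x, x ∈ m₁ → x ∈ m₂ → False := by
    intro x h1 h2
    exact List.disjoint_of_nodup_append hm12nd h1 (by simp [h2])
  have hm₁sub : listSet m₁ ⊆ T.desc v := by
    intro x hx
    rw [← hmset, hm12]; rw [mem_listSet] at hx ⊢; simp [hx]
  have hm₂sub : listSet m₂ ⊆ T.desc v := by
    intro x hx
    rw [← hmset, hm12]; rw [mem_listSet] at hx ⊢; simp [hx]
  -- dichotomy for children of v
  have hdich : ∀ c ∈ T.children v, T.desc c ⊆ listSet m₁ ∨ T.desc c ⊆ listSet m₂ := by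
    intro c hc
    have hdc : T.desc c ⊆ listSet l := fun x hx => hdvsub (T.child_desc_subset hc hx)
    obtain ⟨mc, hmc, hmcset⟩ := hconf c hdc
    have hvmc : v ∉ mc := by
      rw [← mem_listSet, hmcset]
      exact T.not_mem_desc_child hc
    have := infix_side_of_nodup hnd2 (hleq ▸ hmc) hvmc
    rcases this with h | h
    · left
      intro x hx
      have hxmc : x ∈ listSet (s ++ m₁) := by
        rw [← hmcset] at hx
        exact (h.subset) hx
      rw [listSet_append] at hxmc
      rcases hxmc with hxs | hxm
      · exfalso
        have hxv : x ∈ T.desc v := T.child_desc_subset hc hx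
        rw [hsset] at hxs
        exact Set.disjoint_left.mp (disj_head_desc T hVs hv hvVs) hxs hxv
      · exact hxm
    · right
      intro x hx
      rw [← hmcset] at hx
      exact h.subset hx
  set W : Set V := {c | c ∈ T.children v ∧ T.desc c ⊆ listSet m₁} with hW
  set W' : Set V := {c | c ∈ T.children v ∧ T.desc c ⊆ listSet m₂} with hW'
  have hWsub : W ⊆ T.children v := fun c hc => hc.1
  have hW'sub : W' ⊆ T.children v := fun c hc => hc.1
  have hWW' : W ∪ W' = T.children v := by
    apply Set.Subset.antisymm
    · rintro c (hc | hc) <;> exact hc.1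
    · intro c hc
      rcases hdich c hc with h | h
      · exact Or.inl ⟨hc, h⟩
      · exact Or.inr ⟨hc, h⟩
  have hdisjWW' : Disjoint W W' := by
    rw [Set.disjoint_left]
    rintro c ⟨hc1, hc2⟩ ⟨hc1', hc2'⟩
    exact hm₁m₂ c (hc2 (T.mem_desc_self c)) (hc2' (T.mem_desc_self c))
  have hm₁set : listSet m₁ = T.descU W := by
    apply Set.Subset.antisymm
    · intro x hx
      have hxv : x ∈ T.desc v := hm₁sub hx
      have hxvne : x ≠ v := fun h => hvm₁ (by rw [← h] at hvm₁ ⊢; exact hx)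
      obtain ⟨c, hc, hxc⟩ := T.mem_desc_child hxv hxvne
      rcases hdich c hc with h | h
      · exact Set.mem_biUnion (⟨hc, h⟩ : c ∈ W) hxc
      · exact absurd (h hxc) (fun hh => hm₁m₂ x hx hh)
    · intro x hx
      obtain ⟨c, hc, hxc⟩ := Set.mem_iUnion₂.mp hx
      exact hc.2 hxc
  have hm₂set : listSet m₂ = T.descU W' := by
    apply Set.Subset.antisymm
    · intro x hx
      have hxv : x ∈ T.desc v := hm₂sub hx
      have hxvne : x ≠ v := fun h => hvm₂ (by rw [← h] at hvm₂ ⊢; exact hx)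
      obtain ⟨c, hc, hxc⟩ := T.mem_desc_child hxv hxvne
      rcases hdich c hc with h | h
      · exact absurd (h hxc) (fun hh => hm₁m₂ x hh hx)
      · exact Set.mem_biUnion (⟨hc, h⟩ : c ∈ W') hxc
    · intro x hx
      obtain ⟨c, hc, hxc⟩ := Set.mem_iUnion₂.mp hx
      exact hc.2 hxc
  have haW' : a ∈ T.descU W' := by rw [← hm₂set]; exact ham2
  -- define p and q
  set p : List V := (s ++ m₁) ++ [v] with hp
  set q : List V := v :: m₂ with hq
  have hlpq : l = p ++ m₂ := by rw [hleq, hp]; simp [hq]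
  have hndpq : (p ++ m₂).Nodup := hlpq ▸ hnd
  have hsne : s ≠ [] := by
    intro h
    have : u ∈ listSet s := by rw [hsset]; exact Or.inl rfl
    rw [h] at this; simp at this
  refine ⟨W, W', p, q, hWW', hdisjWW', haW', ?_, ?_, ?_⟩
  · -- DWpred for p
    refine ⟨hndpq.of_append_left, ?_, ?_, ?_, ?_, ⟨s, m₁ ++ [v], by simp [hp], hsset⟩⟩
    · have h1 : p.head? = s.head? := by
        rw [hp, show (s ++ m₁) ++ [v] = s ++ (m₁ ++ [v]) by simp, head?_append_left hsne]
      have h2 : l.head? = s.head? := by rw [← hst, head?_append_left hsne]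
      rw [h1, ← h2, hhead]
    · rw [hp, List.getLast?_concat]
    · rw [hp, listSet_append, listSet_append, hsset, hm₁set, listSet_singleton]
    · intro w hw
      have hwl : T.desc w ⊆ listSet l := fun x hx => by
        rw [hlpq, listSet_append]; exact Or.inl (hw hx)
      obtain ⟨mw, hmw, hmwset⟩ := hconf w hwl
      exact ⟨mw, infix_of_infix_append_left hndpq (hlpq ▸ hmw) (hmwset ▸ hw), hmwset⟩
  · -- DDpred for q
    have hlq : l = (s ++ m₁) ++ q := by rw [hleq, hq]
    have hndq : ((s ++ m₁) ++ q).Nodup := hlq ▸ hnd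
    refine ⟨hndq.of_append_right, rfl, ?_, ?_, ?_⟩
    · have : l.getLast? = q.getLast? := by
        rw [hlq, List.getLast?_append]
        cases hqq : q.getLast? with
        | none => exact absurd (List.getLast?_eq_none_iff.mp hqq) (by rw [hq]; simp)
        | some y => rfl
      rw [← this, hlast]
    · rw [hq, listSet_cons, hm₂set, Set.insert_eq]
    · intro w hw
      have hwl : T.desc w ⊆ listSet l := fun x hx => by
        rw [hlq, listSet_append]; exact Or.inr (hw hx)
      obtain ⟨mw, hmw, hmwset⟩ := hconf w hwl
      exact ⟨mw, infix_of_infix_append_right hndq (hlq ▸ hmw) (hmwset ▸ hw), hmwset⟩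
  · -- weights
    rw [hleq, pathWeight_split, hp, hq]

end Main2

section Main3
variable {V X : Type} [Fintype V] [MetricSpace X] (T : ParentTree V) (f : V → X)
variable {u v : V} {Vs : Set V}

lemma combine_path (hVs : Vs ⊆ T.children u) (hv : v ∈ T.children u) (hvVs : v ∉ Vs)
    {W W' : Set V} (hWW' : W ∪ W' = T.children v) (hdWW' : Disjoint W W')
    {a : V} (haW' : a ∈ T.descU W') {p q : List V}
    (hp : DWpred T u Vs v W p) (hq : DDpred T v W' a q) :
    ∃ l, DDpred T u (insert v Vs) a l ∧
      pathWeight f l = pathWeight f p + pathWeight f q := by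
  have hW : W ⊆ T.children v := hWW' ▸ Set.subset_union_left
  have hW' : W' ⊆ T.children v := hWW' ▸ Set.subset_union_right
  obtain ⟨hqnd, hqhead, hqlast, hqset, hqconf⟩ := hq
  obtain ⟨hpnd, hphead, hplast, hpset, hpconf, p₁, p₂, hp12, hp₁set⟩ := hp
  -- q = v :: t
  obtain ⟨t, rfl⟩ : ∃ t, q = v :: t := by
    cases q with
    | nil => simp at hqhead
    | cons y t => exact ⟨t, by rw [Option.some_inj.mp hqhead]⟩
  have hvW'mem : v ∉ T.descU W' := T.not_mem_descU_child hW'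
  have hvt : v ∉ t := by
    rw [List.nodup_cons] at hqnd
    exact hqnd.1
  have htset : listSet t = T.descU W' := by
    rw [listSet_cons] at hqset
    apply Set.Subset.antisymm
    · intro x hx
      have : x ∈ insert v (listSet t) := Or.inr hx
      rw [hqset] at this
      rcases this with h | h
      · exact absurd (h ▸ hx) hvt
      · exact h
    · intro x hx
      have : x ∈ insert v (listSet t) := by rw [hqset]; exact Or.inr hx
      rcases this with h | h
      · exact absurd (h ▸ hx) hvW'mem
      · exact h
  -- p = p' ++ [v]
  obtain ⟨p', hpv⟩ := List.getLast?_eq_some_iff.mp hplast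
  set l := p ++ t with hl
  -- disjointness of p and t
  have hdWv : T.descU W ⊆ T.desc v := T.descU_subset_desc hW
  have hdW'v : T.descU W' ⊆ T.desc v := T.descU_subset_desc hW'
  have hudv : u ∉ T.desc v := T.not_mem_desc_child hv
  have hdisjVsv : Disjoint (T.desc v) (T.descU Vs) := T.desc_disjoint_descU hVs hv hvVs
  have hdisjWW'd : Disjoint (T.descU W) (T.descU W') := T.descU_disjoint hW hW' hdWW'
  have hptdisj : ∀ x, x ∈ p → x ∈ t → False := by
    intro x hxp hxt
    have hxp' : x ∈ {u} ∪ T.descU Vs ∪ T.descU W ∪ {v} := by rw [← hpset]; exact hxp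
    have hxt' : x ∈ T.descU W' := by rw [← htset]; exact hxt
    rcases hxp' with ((h | h) | h) | h
    · exact hudv (h ▸ hdW'v hxt')
    · exact Set.disjoint_right.mp hdisjVsv h (hdW'v hxt')
    · exact Set.disjoint_left.mp hdisjWW'd h hxt'
    · exact hvW'mem (h ▸ hxt')
  have hndl : l.Nodup := by
    rw [hl, List.nodup_append]
    exact ⟨hpnd, hqnd.of_cons, fun x hx _ hx' h => by subst h; exact hptdisj x hx hx'⟩
  have hpne : p ≠ [] := by rw [hpv]; simp
  have htne : t ≠ [] := by
    intro h
    rw [h] at htset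
    rw [← htset] at haW'
    simp at haW'
  -- vertex set of l
  have hdesc_v_eq : T.desc v = {v} ∪ (T.descU W ∪ T.descU W') := by
    rw [← T.descU_union, hWW', ← T.desc_eq_union v]
  have hlset : listSet l = {u} ∪ T.descU (insert v Vs) := by
    rw [hl, listSet_append, hpset, htset, T.descU_insert, hdesc_v_eq]
    ext x
    simp only [Set.mem_union, Set.mem_singleton_iff]
    tauto
  have hps : p <+: l := ⟨t, rfl⟩
  have hts : t <:+ l := ⟨p, rfl⟩
  refine ⟨l, ⟨hndl, ?_, ?_, hlset, ?_⟩, ?_⟩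
  · rw [hl, head?_append_left hpne, hphead]
  · rw [hl, List.getLast?_append]
    have h1 : (v :: t).getLast? = t.getLast? := by
      rw [show v :: t = [v] ++ t by simp, List.getLast?_append]
      cases htt : t.getLast? with
      | none => exact absurd (List.getLast?_eq_none_iff.mp htt) htne
      | some y => rfl
    rw [← h1, hqlast]
    cases htt : t.getLast? with
    | none => exact absurd (List.getLast?_eq_none_iff.mp htt) htne
    | some y => rw [h1] at hqlast; rw [htt] at hqlast; rw [← hqlast]; rfl
  · -- conformance
    intro w hsub
    have hwmem : w ∈ listSet l := hsub (T.mem_desc_self w)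
    rw [hlset, T.descU_insert] at hwmem
    rcases hwmem with hw | hw
    · -- w = u : whole list
      have hwu : w = u := hw
      subst hwu
      refine ⟨l, List.infix_refl _, Set.Subset.antisymm ?_ hsub⟩
      rw [hlset, T.descU_insert]
      rintro x (hx | hx | hx)
      · exact hx ▸ T.mem_desc_self _
      · exact T.child_desc_subset hv hx
      · exact T.descU_subset_desc hVs hx
    · rcases hw with hw | hw
      · -- w ∈ desc v
        by_cases hwv : w = v
        · -- suffix p₂ ++ t
          rw [hwv] at hsub ⊢
          have hndp : (p₁ ++ p₂).Nodup := hp12 ▸ hpnd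
          have hp₂set : listSet p₂ = T.descU W ∪ {v} := by
            refine listSet_right_part hndp ?_ hp₁set ?_
            · rw [← hp12, hpset]
              ext x; simp only [Set.mem_union, Set.mem_singleton_iff]; tauto
            · rw [Set.disjoint_left]
              rintro x (hx | hx) hx'
              · rcases hx' with h | h
                · exact hudv (hx ▸ hdWv h)
                · exact hudv (by rw [← hx, h]; exact T.mem_desc_self v)
              · rcases hx' with h | h
                · exact Set.disjoint_right.mp hdisjVsv hx (hdWv h)
                · exact Set.disjoint_right.mp hdisjVsv hx (h ▸ T.mem_desc_self v)
          refine ⟨p₂ ++ t, ⟨p₁, [], by rw [hl, hp12]; simp⟩, ?_⟩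
          rw [listSet_append, hp₂set, htset, hdesc_v_eq]
          ext x; simp only [Set.mem_union, Set.mem_singleton_iff]; tauto
        · obtain ⟨c, hc, hwc⟩ := T.mem_desc_child hw hwv
          have hcWW' : c ∈ W ∪ W' := by rw [← hWW'] at hc; exact hc
          rcases hcWW' with hcW | hcW'
          · -- block inside p
            have hwp : T.desc w ⊆ listSet p := by
              intro x hx
              rw [hpset]
              exact Or.inl (Or.inr (Set.mem_biUnion hcW
                (T.desc_trans hx (T.desc_trans (T.mem_desc_self w) hwc))))
            obtain ⟨mw, hmw, hmwset⟩ := hpconf w hwp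
            exact ⟨mw, hmw.trans hps.isInfix, hmwset⟩
          · -- block inside q
            have hwq : T.desc w ⊆ listSet (v :: t) := by
              intro x hx
              rw [listSet_cons, htset]
              exact Or.inr (Set.mem_biUnion hcW'
                (T.desc_trans hx (T.desc_trans (T.mem_desc_self w) hwc)))
            obtain ⟨mw, hmw, hmwset⟩ := hqconf w hwq
            have hvmw : v ∉ mw := by
              rw [← mem_listSet, hmwset]
              intro hvw
              exact T.not_mem_desc_child (hW' hcW')
                (T.desc_trans hvw (T.desc_trans (T.mem_desc_self w) hwc))
            exact ⟨mw, (infix_cons_of_not_mem hmw hvmw).trans hts.isInfix, hmwset⟩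
      · -- w ∈ descU Vs
        obtain ⟨c, hc, hwc⟩ := Set.mem_iUnion₂.mp hw
        have hwp : T.desc w ⊆ listSet p := by
          intro x hx
          rw [hpset]
          exact Or.inl (Or.inl (Or.inr (Set.mem_biUnion hc
            (T.desc_trans hx (T.desc_trans (T.mem_desc_self w) hwc)))))
        obtain ⟨mw, hmw, hmwset⟩ := hpconf w hwp
        exact ⟨mw, hmw.trans hps.isInfix, hmwset⟩
  · -- weight
    rw [hl, hpv, show (p' ++ [v]) ++ t = p' ++ v :: t by simp, pathWeight_split, ← hpv]

end Main3

section Main4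
variable {V X : Type} [Fintype V] [MetricSpace X]

lemma eq_append_of_infix_getLast {l m : List V} {b : V} (hnd : l.Nodup)
    (hlast : l.getLast? = some b) (hm : m <:+: l) (hbm : b ∈ m) : ∃ s, l = s ++ m := by
  obtain ⟨s, t, hst⟩ := hm
  cases t with
  | nil => exact ⟨s, by rw [← hst]; simp⟩
  | cons y t' =>
    exfalso
    have htne : (y :: t') ≠ [] := by simp
    obtain ⟨c, hc⟩ : ∃ c, (y :: t').getLast? = some c := by
      cases hcc : (y :: t').getLast? with
      | none => exact absurd (List.getLast?_eq_none_iff.mp hcc) htne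
      | some z => exact ⟨z, rfl⟩
    have hlc : l.getLast? = some c := by
      rw [← hst, show s ++ m ++ y :: t' = (s ++ m) ++ y :: t' by simp,
        List.getLast?_append, hc]; rfl
    have hcb : c = b := by rw [hlast] at hlc; exact (Option.some_inj.mp hlc).symm
    have hnd' : ((s ++ m) ++ y :: t').Nodup := by
      rw [show (s ++ m) ++ y :: t' = s ++ m ++ y :: t' by simp, hst]; exact hnd
    exact List.disjoint_of_nodup_append hnd'
      (List.mem_append_right _ (hcb ▸ hbm)) (mem_of_getLast?' hc)

variable (T : ParentTree V) (f : V → X) {u v : V} {Vs : Set V}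

lemma part1_pred (hVs : Vs ⊆ T.children u) (hv : v ∈ T.children u) (hvVs : v ∉ Vs)
    (l : List V) :
    DDpred T u (insert v Vs) v l ↔ DWpred T u Vs v (T.children v) l := by
  have hseteq : {u} ∪ T.descU (insert v Vs)
      = {u} ∪ T.descU Vs ∪ T.descU (T.children v) ∪ {v} := by
    rw [T.descU_insert, T.desc_eq_union v]
    ext x; simp only [Set.mem_union, Set.mem_singleton_iff]; tauto
  constructor
  · rintro ⟨hnd, hh, hl, hset, hconf⟩
    refine ⟨hnd, hh, hl, by rw [hset, hseteq], hconf, ?_⟩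
    have hdv : T.desc v ⊆ listSet l := by
      rw [hset, T.descU_insert]
      intro x hx; exact Or.inr (Or.inl hx)
    obtain ⟨m, hm, hmset⟩ := hconf v hdv
    obtain ⟨s, hls⟩ := eq_append_of_infix_getLast hnd hl hm
      (by rw [← mem_listSet, hmset]; exact T.mem_desc_self v)
    refine ⟨s, m, hls, ?_⟩
    refine listSet_left_part (hls ▸ hnd) ?_ hmset (disj_head_desc T hVs hv hvVs)
    rw [← hls, hset, T.descU_insert]
    ext x; simp only [Set.mem_union, Set.mem_singleton_iff]; tauto
  · rintro ⟨hnd, hh, hl, hset, hconf, -⟩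
    exact ⟨hnd, hh, hl, by rw [hset, ← hseteq], hconf⟩

lemma DD_eq (u : V) (Vs : Set V) (a : V) :
    DD T f u Vs a = sInf {w | ∃ l, DDpred T u Vs a l ∧ pathWeight f l = w} := by
  unfold DD
  congr 1
  ext w
  constructor
  · rintro ⟨l, h1, h2, h3, h4, h5, h6⟩; exact ⟨l, ⟨h1, h2, h3, h4, h5⟩, h6⟩
  · rintro ⟨l, ⟨h1, h2, h3, h4, h5⟩, h6⟩; exact ⟨l, h1, h2, h3, h4, h5, h6⟩

lemma DW_eq (u : V) (Vs : Set V) (v : V) (Ws : Set V) :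
    DW T f u Vs v Ws = sInf {w | ∃ l, DWpred T u Vs v Ws l ∧ pathWeight f l = w} := by
  unfold DW
  congr 1
  ext w
  constructor
  · rintro ⟨l, h1, h2, h3, h4, h5, h6, h7⟩; exact ⟨l, ⟨h1, h2, h3, h4, h5, h6⟩, h7⟩
  · rintro ⟨l, ⟨h1, h2, h3, h4, h5, h6⟩, h7⟩; exact ⟨l, h1, h2, h3, h4, h5, h6, h7⟩

end Main4


/-- The recurrence (eq-a): `D^u_{V ∪ {v}}(v) = D^u_{V,C(v)}(v)`, and for
`a ∈ T(v)`, `a ≠ v`, the value `D^u_{V ∪ {v}}(a)` is the minimum over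
bipartitions `W ⊎ W̄ = C(v)` with `a ∈ T(W̄)` of `D^u_{V,W}(v) + D^v_{W̄}(a)`. -/
theorem stmt1 {V X : Type} [Fintype V] [MetricSpace X]
    (hn : 3 ≤ Fintype.card V) (f : V → X) (hf : Function.Injective f)
    (T : ParentTree V) (u v : V) (Vs : Set V)
    (hVs : Vs ⊆ T.children u) (hv : v ∈ T.children u) (hvVs : v ∉ Vs) :
    DD T f u (insert v Vs) v = DW T f u Vs v (T.children v) ∧
    ∀ a ∈ T.desc v, a ≠ v →
      DD T f u (insert v Vs) a =
        sInf {r | ∃ W W' : Set V, W ∪ W' = T.children v ∧ Disjoint W W' ∧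
          a ∈ T.descU W' ∧ r = DW T f u Vs v W + DD T f v W' a} := by
  constructor
  · rw [DD_eq, DW_eq]
    congr 1
    ext w
    constructor
    · rintro ⟨l, hl, hw⟩
      exact ⟨l, (part1_pred T hVs hv hvVs l).mp hl, hw⟩
    · rintro ⟨l, hl, hw⟩
      exact ⟨l, (part1_pred T hVs hv hvVs l).mpr hl, hw⟩
  · intro a ha hav
    set A := {w | ∃ l, DDpred T u (insert v Vs) a l ∧ pathWeight f l = w} with hA
    set B := {r | ∃ W W' : Set V, W ∪ W' = T.children v ∧ Disjoint W W' ∧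
      a ∈ T.descU W' ∧ r = DW T f u Vs v W + DD T f v W' a} with hB
    rw [DD_eq]
    have hAfin : A.Finite := weight_set_finite f _ (fun l hl => hl.1)
    have hcomb : ∀ W W' : Set V, W ∪ W' = T.children v → Disjoint W W' →
        a ∈ T.descU W' →
        ∃ l, DDpred T u (insert v Vs) a l ∧
          pathWeight f l = DW T f u Vs v W + DD T f v W' a := by
      intro W W' h1 h2 h3
      have hWsub : W ⊆ T.children v := h1 ▸ Set.subset_union_left
      have hW'sub : W' ⊆ T.children v := h1 ▸ Set.subset_union_right
      -- optimal DW path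
      have hfinDW : {w | ∃ l, DWpred T u Vs v W l ∧ pathWeight f l = w}.Finite :=
        weight_set_finite f _ (fun l hl => hl.1)
      have hneDW : {w | ∃ l, DWpred T u Vs v W l ∧ pathWeight f l = w}.Nonempty := by
        obtain ⟨p0, h0a, h0b, h0c, h0d, h0e, h0f⟩ := exists_DW_path T hVs hv hvVs hWsub
        exact ⟨pathWeight f p0, p0, ⟨h0a, h0b, h0c, h0d, h0e, h0f⟩, rfl⟩
      have hDWmem : DW T f u Vs v W ∈
          {w | ∃ l, DWpred T u Vs v W l ∧ pathWeight f l = w} := by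
        rw [DW_eq]; exact hneDW.csInf_mem hfinDW
      obtain ⟨p, hp, hpw⟩ := hDWmem
      -- optimal DD path from v
      have hfinDD : {w | ∃ l, DDpred T v W' a l ∧ pathWeight f l = w}.Finite :=
        weight_set_finite f _ (fun l hl => hl.1)
      have hneDD : {w | ∃ l, DDpred T v W' a l ∧ pathWeight f l = w}.Nonempty := by
        obtain ⟨q0, h0a, h0b, h0c, h0d, h0e⟩ := exists_DD_path T hW'sub h3
        exact ⟨pathWeight f q0, q0, ⟨h0a, h0b, h0c, h0d, h0e⟩, rfl⟩
      have hDDmem : DD T f v W' a ∈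
          {w | ∃ l, DDpred T v W' a l ∧ pathWeight f l = w} := by
        rw [DD_eq]; exact hneDD.csInf_mem hfinDD
      obtain ⟨q, hq, hqw⟩ := hDDmem
      obtain ⟨l, hl, hlw⟩ := combine_path T f hVs hv hvVs h1 h2 h3 hp hq
      exact ⟨l, hl, by rw [hlw, hpw, hqw]⟩
    have haCh : a ∈ T.descU (T.children v) := by
      obtain ⟨c, hc, hac⟩ := T.mem_desc_child ha hav
      exact Set.mem_biUnion hc hac
    have hBne : B.Nonempty :=
      ⟨DW T f u Vs v ∅ + DD T f v (T.children v) a,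
        ∅, T.children v, by simp, disjoint_bot_left, haCh, rfl⟩
    have hAne : A.Nonempty := by
      obtain ⟨l, hl, hlw⟩ := hcomb ∅ (T.children v) (by simp) disjoint_bot_left haCh
      exact ⟨pathWeight f l, l, hl, rfl⟩
    have hBfin : B.Finite := by
      apply Set.Finite.subset (Set.finite_range
        (fun pq : Set V × Set V => DW T f u Vs v pq.1 + DD T f v pq.2 a))
      rintro r ⟨W, W', -, -, -, rfl⟩
      exact ⟨(W, W'), rfl⟩
    apply le_antisymm
    · apply le_csInf hBne
      rintro r ⟨W, W', h1, h2, h3, rfl⟩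
      obtain ⟨l, hl, hlw⟩ := hcomb W W' h1 h2 h3
      rw [← hlw]
      exact csInf_le hAfin.bddBelow ⟨l, hl, rfl⟩
    · have hmem : sInf A ∈ A := hAne.csInf_mem hAfin
      obtain ⟨l, hl, hlw⟩ := hmem
      obtain ⟨W, W', p, q, h1, h2, h3, hp, hq, hw⟩ :=
        decompose_path T f hVs hv hvVs ha hav hl
      have hDWle : DW T f u Vs v W ≤ pathWeight f p := by
        rw [DW_eq]
        exact csInf_le (weight_set_finite f _ (fun l hl => hl.1)).bddBelow ⟨p, hp, rfl⟩
      have hDDle : DD T f v W' a ≤ pathWeight f q := by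
        rw [DD_eq]
        exact csInf_le (weight_set_finite f _ (fun l hl => hl.1)).bddBelow ⟨q, hq, rfl⟩
      calc sInf B ≤ DW T f u Vs v W + DD T f v W' a :=
            csInf_le hBfin.bddBelow ⟨W, W', h1, h2, h3, rfl⟩
        _ ≤ pathWeight f p + pathWeight f q := add_le_add hDWle hDDle
        _ = pathWeight f l := hw.symm
        _ = sInf A := hlw
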